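/- Shuffle exponential bound on group-like elements: for a shuffle-compatible partition, if u ∈ 𝒮(S)* then exp_⧢(u) ∈ 𝒮(S)*, |exp_⧢(u)|_x ≤ exp(|u|_x), and exp(⟨u,x⟩) = ⟨exp_⧢(u), x⟩ for each group-like x ∈ 𝒮(S). -/

import Mathlib

/-- The extended tensor algebra `T((ℝ^d))`. -/
abbrev TA (d : ℕ) := List (Fin d) → ℝ

/-- The subword of `K` obtained by keeping exactly the positions in `s`. -/
def subword {d : ℕ} (K : List (Fin d)) (s : Finset (Fin K.length)) : List (Fin d) :=
  ((List.finRange K.length).filter (fun i => i ∈ s)).map (fun i => K.get i)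

/-- The shuffle product on `T((ℝ^d))`. -/
noncomputable def shMul {d : ℕ} (u v : TA d) : TA d :=
  fun K => ∑ s : Finset (Fin K.length), u (subword K s) * v (subword K sᶜ)

/-- The basis element `e_I`. -/
def delta {d : ℕ} (I : List (Fin d)) : TA d := fun J => if J = I then 1 else 0

/-- The set `𝒮(S)` of group-like elements with first level in `S`. -/
noncomputable def GroupLikeSet {d : ℕ} (S : Set (Fin d → ℝ)) : Set (TA d) :=
  {x | x [] = 1 ∧ (fun i => x [i]) ∈ S ∧
    ∀ I J : List (Fin d), x I * x J = ∑' K : List (Fin d), shMul (delta I) (delta J) K * x K}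

/-- Partitions of the set of all words, given by an index map `part`; each block contains
only words of one fixed length. -/
def SameLengthBlocks {d : ℕ} (part : List (Fin d) → ℕ) : Prop :=
  ∀ I J : List (Fin d), part I = part J → I.length = J.length

/-- Shuffle-compatibility of a partition: the shuffle of two blocks is supported in a
single block. -/
noncomputable def ShuffleCompatible {d : ℕ} (part : List (Fin d) → ℕ) : Prop :=
  ∀ k₁ k₂ : ℕ, ∃ k : ℕ, ∀ I J : List (Fin d), part I = k₁ → part J = k₂ →
    ∀ K : List (Fin d), shMul (delta I) (delta J) K ≠ 0 → part K = k

/-- The block sum `Σ_{I ∈ Π_k} u_I x_I`. -/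
noncomputable def blockSum {d : ℕ} (part : List (Fin d) → ℕ) (u x : TA d) (k : ℕ) : ℝ :=
  ∑' I : {I : List (Fin d) // part I = k}, u I * x I

/-- The semi-norm `|u|_x = Σ_k |Σ_{I ∈ Π_k} u_I x_I|`. -/
noncomputable def seminorm' {d : ℕ} (part : List (Fin d) → ℕ) (u x : TA d) : ℝ :=
  ∑' k : ℕ, |blockSum part u x k|

/-- Membership `u ∈ 𝒮(S)*`: `|u|_x < ∞` for every group-like `x`. -/
noncomputable def DualMem {d : ℕ} (part : List (Fin d) → ℕ) (S : Set (Fin d → ℝ))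
    (u : TA d) : Prop :=
  ∀ x ∈ GroupLikeSet S, Summable (fun k => |blockSum part u x k|)

/-- The level-`n` pairing `⟨π_n(u), π_n(x)⟩`. -/
noncomputable def levelPair {d : ℕ} (u x : TA d) (n : ℕ) : ℝ :=
  ∑' I : {I : List (Fin d) // I.length = n}, u I * x I

/-- The pairing `⟨u, x⟩ = Σ_n ⟨π_n(u), π_n(x)⟩`. -/
noncomputable def pairTA {d : ℕ} (u x : TA d) : ℝ := ∑' n : ℕ, levelPair u x n


/-- The unit `e_∅` of the shuffle algebra. -/
def emptyWordUnit {d : ℕ} : TA d := fun K => if K = [] then 1 else 0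

/-- `ū := u − u_∅ e_∅`. -/
def bar {d : ℕ} (u : TA d) : TA d := fun K => if K = [] then 0 else u K

/-- Shuffle powers `u^{⧢k}`. -/
noncomputable def shPow {d : ℕ} (u : TA d) : ℕ → TA d
  | 0 => emptyWordUnit
  | k + 1 => shMul (shPow u k) u

/-- The shuffle exponential `exp_⧢(u) = Σ_{k≥0} u^{⧢k}/k!`; each component is a finite
sum. -/
noncomputable def shExp {d : ℕ} (u : TA d) : TA d :=
  fun K => Real.exp (u []) *
    ∑ k ∈ Finset.range (K.length + 1), shPow (bar u) k K / (Nat.factorial k : ℝ)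

section ShuffleAux

open Finset

variable {d : ℕ}

theorem subword_length (K : List (Fin d)) (s : Finset (Fin K.length)) :
    (subword K s).length = s.card := by
  rw [subword, List.length_map]
  have hnd : ((List.finRange K.length).filter (fun i => i ∈ s)).Nodup :=
    (List.nodup_finRange _).filter _
  have h1 : ((List.finRange K.length).filter (fun i => i ∈ s)).toFinset = s := by
    ext i; simp
  simpa [h1] using (List.toFinset_card_of_nodup hnd).symm

/-- The finset of all words of length `n`. -/
def allWords (d n : ℕ) : Finset (List (Fin d)) :=
  Finset.image (fun f : Fin n → Fin d => List.ofFn f) Finset.univ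

theorem mem_allWords {n : ℕ} {I : List (Fin d)} : I ∈ allWords d n ↔ I.length = n := by
  constructor
  · intro h
    simp only [allWords, Finset.mem_image] at h
    obtain ⟨f, -, rfl⟩ := h
    simp
  · intro h
    subst h
    simp only [allWords, Finset.mem_image]
    exact ⟨I.get, Finset.mem_univ _, List.ofFn_get I⟩

theorem length_of_shMul_delta_ne_zero {I J K : List (Fin d)}
    (h : shMul (delta I) (delta J) K ≠ 0) : K.length = I.length + J.length := by
  rw [shMul] at h
  obtain ⟨s, -, hs⟩ := Finset.exists_ne_zero_of_sum_ne_zero h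
  rcases mul_ne_zero_iff.mp hs with ⟨h1, h2⟩
  have e1 : subword K s = I := by
    by_contra hne; simp [delta, hne] at h1
  have e2 : subword K sᶜ = J := by
    by_contra hne; simp [delta, hne] at h2
  have c1 := subword_length K s
  have c2 := subword_length K sᶜ
  have c3 : s.card + sᶜ.card = K.length := by
    simpa using Finset.card_add_card_compl s
  rw [e1] at c1; rw [e2] at c2
  omega

theorem shPow_eq_zero {w : TA d} (hw : w [] = 0) :
    ∀ (k : ℕ) (K : List (Fin d)), K.length < k → shPow w k K = 0 := by
  intro k
  induction k with
  | zero => exact fun K h => absurd h (Nat.not_lt_zero _)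
  | succ k ih =>
    intro K hK
    show shMul (shPow w k) w K = 0
    rw [shMul]
    apply Finset.sum_eq_zero
    intro s _
    rcases eq_or_ne sᶜ ∅ with h | h
    · have hnil : subword K sᶜ = [] := by
        rw [h]; simp [subword]
      rw [hnil, hw, mul_zero]
    · have hc : 1 ≤ sᶜ.card := Finset.card_pos.mpr (Finset.nonempty_iff_ne_empty.mpr h)
      have hcard : s.card + sᶜ.card = K.length := by
        simpa using Finset.card_add_card_compl s
      have hlt : (subword K s).length < k := by
        rw [subword_length]; omega
      rw [ih _ hlt, zero_mul]

open Classical in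
/-- The common length of words in block `k`. -/
noncomputable def lenOf (part : List (Fin d) → ℕ) (k : ℕ) : ℕ :=
  if h : ∃ I : List (Fin d), part I = k then h.choose.length else 0

/-- Block `k` as a finset. -/
noncomputable def blockF (part : List (Fin d) → ℕ) (k : ℕ) : Finset (List (Fin d)) :=
  (allWords d (lenOf part k)).filter (fun I => part I = k)

variable {part : List (Fin d) → ℕ}

theorem lenOf_eq (hlen : SameLengthBlocks part) {I : List (Fin d)} {k : ℕ}
    (h : part I = k) : lenOf part k = I.length := by
  have hex : ∃ I : List (Fin d), part I = k := ⟨I, h⟩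
  rw [lenOf, dif_pos hex]
  exact hlen _ _ (hex.choose_spec.trans h.symm)

theorem mem_blockF (hlen : SameLengthBlocks part) {k : ℕ} {I : List (Fin d)} :
    I ∈ blockF part k ↔ part I = k := by
  simp only [blockF, Finset.mem_filter, mem_allWords]
  exact ⟨fun h => h.2, fun h => ⟨(lenOf_eq hlen h).symm, h⟩⟩

theorem length_of_mem_blockF {k : ℕ} {I : List (Fin d)}
    (h : I ∈ blockF part k) : I.length = lenOf part k :=
  mem_allWords.mp (Finset.mem_filter.mp h).1

theorem blockSum_eq (hlen : SameLengthBlocks part) (u x : TA d) (k : ℕ) :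
    blockSum part u x k = ∑ I ∈ blockF part k, u I * x I := by
  have h1 : blockSum part u x k
      = ∑' I : {I : List (Fin d) | part I = k}, u ↑I * x ↑I := rfl
  rw [h1, tsum_subtype {I : List (Fin d) | part I = k} (fun I => u I * x I)]
  refine (tsum_eq_sum (s := blockF part k) ?_).trans ?_
  · intro I hI
    have hmem : I ∉ {I : List (Fin d) | part I = k} := fun hmem =>
      hI ((mem_blockF hlen).mpr hmem)
    exact Set.indicator_of_notMem hmem _
  · refine Finset.sum_congr rfl fun I hI => ?_
    have hmem : I ∈ {I : List (Fin d) | part I = k} := (mem_blockF hlen).mp hI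
    exact Set.indicator_of_mem hmem _

theorem levelPair_eq (u x : TA d) (n : ℕ) :
    levelPair u x n = ∑ I ∈ allWords d n, u I * x I := by
  have h1 : levelPair u x n
      = ∑' I : {I : List (Fin d) | I.length = n}, u ↑I * x ↑I := rfl
  rw [h1, tsum_subtype {I : List (Fin d) | I.length = n} (fun I => u I * x I)]
  refine (tsum_eq_sum (s := allWords d n) ?_).trans ?_
  · intro I hI
    have hmem : I ∉ {I : List (Fin d) | I.length = n} := fun hmem =>
      hI (mem_allWords.mpr hmem)
    exact Set.indicator_of_notMem hmem _
  · refine Finset.sum_congr rfl fun I hI => ?_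
    have hmem : I ∈ {I : List (Fin d) | I.length = n} := mem_allWords.mp hI
    exact Set.indicator_of_mem hmem _

/-- The index function from shuffle compatibility. -/
noncomputable def fIdx (hcompat : ShuffleCompatible part) (k₁ k₂ : ℕ) : ℕ :=
  (hcompat k₁ k₂).choose

theorem fIdx_spec (hcompat : ShuffleCompatible part) {I J K : List (Fin d)}
    (h : shMul (delta I) (delta J) K ≠ 0) :
    part K = fIdx hcompat (part I) (part J) :=
  (hcompat (part I) (part J)).choose_spec I J rfl rfl K h

theorem exp_eq_tsum_pow_div (y : ℝ) : Real.exp y = ∑' n : ℕ, y ^ n / (Nat.factorial n : ℝ) := by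
  rw [Real.exp_eq_exp_ℝ, NormedSpace.exp_eq_tsum_div]

end ShuffleAux
section ShuffleMain

open Finset

variable {d : ℕ} {part : List (Fin d) → ℕ} {Sset : Set (Fin d → ℝ)} {x : TA d}

theorem blockSum_shMul (hlen : SameLengthBlocks part) (hcompat : ShuffleCompatible part)
    (hx : x ∈ GroupLikeSet Sset) (u v : TA d) (m : ℕ) :
    blockSum part (shMul u v) x m =
      ∑' p : ℕ × ℕ, (if fIdx hcompat p.1 p.2 = m then
        blockSum part u x p.1 * blockSum part v x p.2 else 0) := by
  classical
  set n := lenOf part m with hn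
  set W : Finset (List (Fin d) × List (Fin d)) :=
    (Finset.range (n+1)).biUnion (fun j => (allWords d j) ×ˢ (allWords d (n-j))) with hW
  have memW : ∀ p : List (Fin d) × List (Fin d), p ∈ W ↔ p.1.length + p.2.length = n := by
    intro p
    simp only [hW, Finset.mem_biUnion, Finset.mem_range, Finset.mem_product, mem_allWords]
    constructor
    · rintro ⟨j, hj, h1, h2⟩; omega
    · intro h; exact ⟨p.1.length, by omega, rfl, by omega⟩
  have hKlen : ∀ K ∈ blockF part m, K.length = n := by
    intro K hK; rw [hn]; exact length_of_mem_blockF hK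
  rw [blockSum_eq hlen]
  have step2 : ∀ K ∈ blockF part m, shMul u v K * x K
      = ∑ p ∈ W, u p.1 * v p.2 * (shMul (delta p.1) (delta p.2) K * x K) := by
    intro K hK
    have hsh : shMul u v K = ∑ p ∈ W, u p.1 * v p.2 * shMul (delta p.1) (delta p.2) K := by
      rw [shMul]
      calc ∑ s : Finset (Fin K.length), u (subword K s) * v (subword K sᶜ)
          = ∑ s : Finset (Fin K.length), ∑ p ∈ W,
              u p.1 * v p.2 * (delta p.1 (subword K s) * delta p.2 (subword K sᶜ)) := by
            refine Finset.sum_congr rfl fun s _ => ?_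
            rw [Finset.sum_eq_single (subword K s, subword K sᶜ)]
            · simp [delta]
            · intro p _ hne
              by_cases h1 : subword K s = p.1
              · have h2 : subword K sᶜ ≠ p.2 := fun h2 => hne (by rw [h1, h2])
                simp [delta, h2]
              · simp [delta, h1]
            · intro hmem
              exfalso; apply hmem
              apply (memW _).mpr
              have hcc : s.card + sᶜ.card = K.length := by
                simpa using Finset.card_add_card_compl s
              rw [subword_length, subword_length, hcc, hKlen K hK]
          _ = ∑ p ∈ W, ∑ s : Finset (Fin K.length),
              u p.1 * v p.2 * (delta p.1 (subword K s) * delta p.2 (subword K sᶜ)) :=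
            Finset.sum_comm
          _ = ∑ p ∈ W, u p.1 * v p.2 * shMul (delta p.1) (delta p.2) K := by
            refine Finset.sum_congr rfl fun p _ => ?_
            rw [shMul, Finset.mul_sum]
    rw [hsh, Finset.sum_mul]
    exact Finset.sum_congr rfl fun p _ => by ring
  rw [Finset.sum_congr rfl step2, Finset.sum_comm]
  have hA : ∀ p : List (Fin d) × List (Fin d),
      (∑ K ∈ blockF part m, shMul (delta p.1) (delta p.2) K * x K)
        = if fIdx hcompat (part p.1) (part p.2) = m then x p.1 * x p.2 else 0 := by
    intro p
    split_ifs with hf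
    · have h0 : ∀ K ∉ blockF part m, shMul (delta p.1) (delta p.2) K * x K = 0 := by
        intro K hK
        rcases eq_or_ne (shMul (delta p.1) (delta p.2) K) 0 with h | h
        · rw [h, zero_mul]
        · exact absurd ((mem_blockF hlen).mpr ((fIdx_spec hcompat h).trans hf)) hK
      rw [hx.2.2 p.1 p.2, tsum_eq_sum h0]
    · apply Finset.sum_eq_zero
      intro K hK
      rcases eq_or_ne (shMul (delta p.1) (delta p.2) K) 0 with h | h
      · rw [h, zero_mul]
      · exact absurd ((fIdx_spec hcompat h).symm.trans ((mem_blockF hlen).mp hK)) hf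
  have step4 : (∑ p ∈ W, ∑ K ∈ blockF part m,
        u p.1 * v p.2 * (shMul (delta p.1) (delta p.2) K * x K))
      = ∑ p ∈ W, (if fIdx hcompat (part p.1) (part p.2) = m then
          u p.1 * v p.2 * (x p.1 * x p.2) else 0) := by
    refine Finset.sum_congr rfl fun p _ => ?_
    rw [← Finset.mul_sum, hA p, mul_ite, mul_zero]
  rw [step4, ← Finset.sum_filter]
  set s₀ := W.filter (fun p => fIdx hcompat (part p.1) (part p.2) = m) with hs₀
  set T := s₀.image (fun p => (part p.1, part p.2)) with hT
  have hcondT : ∀ q ∈ T, fIdx hcompat q.1 q.2 = m := by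
    intro q hq
    obtain ⟨p, hp, rfl⟩ := Finset.mem_image.mp hq
    exact (Finset.mem_filter.mp hp).2
  have hfib : ∀ q ∈ T, s₀.filter (fun p => (part p.1, part p.2) = q)
      = blockF part q.1 ×ˢ blockF part q.2 := by
    intro q hq
    obtain ⟨p₀, hp₀, hq₀⟩ := Finset.mem_image.mp hq
    have hp₀W : p₀ ∈ W := (Finset.mem_filter.mp hp₀).1
    have hp₀f : fIdx hcompat (part p₀.1) (part p₀.2) = m := (Finset.mem_filter.mp hp₀).2
    ext p
    constructor
    · intro hp
      have h1 := (Finset.mem_filter.mp hp).2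
      exact Finset.mem_product.mpr
        ⟨(mem_blockF hlen).mpr (congrArg Prod.fst h1),
         (mem_blockF hlen).mpr (congrArg Prod.snd h1)⟩
    · intro hp
      obtain ⟨hpa, hpb⟩ := Finset.mem_product.mp hp
      have e1 : part p.1 = q.1 := (mem_blockF hlen).mp hpa
      have e2 : part p.2 = q.2 := (mem_blockF hlen).mp hpb
      have e1' : part p.1 = part p₀.1 := by rw [e1, ← congrArg Prod.fst hq₀]
      have e2' : part p.2 = part p₀.2 := by rw [e2, ← congrArg Prod.snd hq₀]
      have lW : p ∈ W := by
        rw [memW]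
        rw [hlen _ _ e1', hlen _ _ e2']
        exact (memW p₀).mp hp₀W
      refine Finset.mem_filter.mpr ⟨Finset.mem_filter.mpr ⟨lW, ?_⟩, Prod.ext_iff.mpr ⟨e1, e2⟩⟩
      rw [e1', e2']
      exact hp₀f
  rw [← Finset.sum_fiberwise_of_maps_to (g := fun p : List (Fin d) × List (Fin d) => (part p.1, part p.2))
      (t := T) (fun p hp => Finset.mem_image_of_mem _ hp)
      (fun p : List (Fin d) × List (Fin d) => u p.1 * v p.2 * (x p.1 * x p.2))]
  have step6 : ∀ q ∈ T, (∑ p ∈ s₀.filter (fun p => (part p.1, part p.2) = q),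
      u p.1 * v p.2 * (x p.1 * x p.2)) = blockSum part u x q.1 * blockSum part v x q.2 := by
    intro q hq
    rw [hfib q hq, Finset.sum_product, blockSum_eq hlen, blockSum_eq hlen,
      Finset.sum_mul_sum]
    exact Finset.sum_congr rfl fun I _ => Finset.sum_congr rfl fun J _ => by ring
  rw [Finset.sum_congr rfl step6]
  have h0 : ∀ q : ℕ × ℕ, q ∉ T → (if fIdx hcompat q.1 q.2 = m then
      blockSum part u x q.1 * blockSum part v x q.2 else 0) = 0 := by
    intro q hq
    split_ifs with hf
    · by_contra hne
      have h1 : blockSum part u x q.1 ≠ 0 := left_ne_zero_of_mul hne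
      have h2 : blockSum part v x q.2 ≠ 0 := right_ne_zero_of_mul hne
      rw [blockSum_eq hlen] at h1 h2
      obtain ⟨I, hI, hI0⟩ := Finset.exists_ne_zero_of_sum_ne_zero h1
      obtain ⟨J, hJ, hJ0⟩ := Finset.exists_ne_zero_of_sum_ne_zero h2
      have hxI : x I ≠ 0 := right_ne_zero_of_mul hI0
      have hxJ : x J ≠ 0 := right_ne_zero_of_mul hJ0
      have hxx : x I * x J ≠ 0 := mul_ne_zero hxI hxJ
      rw [hx.2.2 I J] at hxx
      have hex : ∃ K, shMul (delta I) (delta J) K * x K ≠ 0 := by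
        by_contra hK
        push_neg at hK
        exact hxx (by rw [tsum_congr hK]; exact tsum_zero)
      obtain ⟨K, hK0⟩ := hex
      have hshK : shMul (delta I) (delta J) K ≠ 0 := left_ne_zero_of_mul hK0
      have hpI : part I = q.1 := (mem_blockF hlen).mp hI
      have hpJ : part J = q.2 := (mem_blockF hlen).mp hJ
      have hpK : part K = m := by
        rw [fIdx_spec hcompat hshK, hpI, hpJ]; exact hf
      have hKn : K.length = n := by rw [hn]; exact (lenOf_eq hlen hpK).symm
      have hlenIJ := length_of_shMul_delta_ne_zero hshK
      apply hq
      refine Finset.mem_image.mpr ⟨(I, J), Finset.mem_filter.mpr ⟨(memW (I, J)).mpr (by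
        simp only []
        omega), ?_⟩, ?_⟩
      · show fIdx hcompat (part I) (part J) = m
        rw [hpI, hpJ]; exact hf
      · show (part I, part J) = q
        exact Prod.ext_iff.mpr ⟨hpI, hpJ⟩
    · rfl
  rw [tsum_eq_sum h0]
  exact Finset.sum_congr rfl fun q hq => (if_pos (hcondT q hq)).symm

end ShuffleMain
section ShuffleMain2

open Finset

variable {d : ℕ} {part : List (Fin d) → ℕ} {Sset : Set (Fin d → ℝ)} {x : TA d}

theorem tsum_preimage_ite {α : Type*} (F : α → ℝ) (g : α → ℕ) (m : ℕ) :
    (∑' p : ↥(g ⁻¹' {m}), F ↑p) = ∑' p : α, if g p = m then F p else 0 := by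
  classical
  rw [_root_.tsum_subtype]
  refine tsum_congr fun p => ?_
  by_cases h : g p = m
  · rw [Set.indicator_of_mem (by simpa using h), if_pos h]
  · rw [Set.indicator_of_notMem (by simpa using h), if_neg h]

theorem shMul_summ (hlen : SameLengthBlocks part) (hcompat : ShuffleCompatible part)
    (hx : x ∈ GroupLikeSet Sset) (u v : TA d)
    (hu : Summable fun k => |blockSum part u x k|)
    (hv : Summable fun k => |blockSum part v x k|) :
    Summable (fun k => |blockSum part (shMul u v) x k|) ∧
    (∑' k, |blockSum part (shMul u v) x k|)
      ≤ (∑' k, |blockSum part u x k|) * (∑' k, |blockSum part v x k|) ∧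
    HasSum (fun k => blockSum part (shMul u v) x k)
      ((∑' k, blockSum part u x k) * (∑' k, blockSum part v x k)) := by
  classical
  set F : ℕ × ℕ → ℝ := fun p => blockSum part u x p.1 * blockSum part v x p.2 with hF
  have habs : Summable fun p => |F p| := by
    have := hu.mul_of_nonneg hv (fun k => abs_nonneg _) (fun k => abs_nonneg _)
    refine this.congr fun p => ?_
    rw [hF, abs_mul]
  have hFsum : Summable F := summable_abs_iff.mp habs
  set g : ℕ × ℕ → ℕ := fun p => fIdx hcompat p.1 p.2 with hg
  have hval : ∀ m, (∑' p : ↥(g ⁻¹' {m}), F ↑p) = blockSum part (shMul u v) x m := by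
    intro m
    rw [tsum_preimage_ite, blockSum_shMul hlen hcompat hx u v m]
  have hfib := hFsum.hasSum.tsum_fiberwise g
  have habsfib := habs.hasSum.tsum_fiberwise g
  have hmain : HasSum (fun m => blockSum part (shMul u v) x m) (∑' p, F p) := by
    have h2 : (fun m => ∑' p : ↥(g ⁻¹' {m}), F ↑p)
        = fun m => blockSum part (shMul u v) x m := funext hval
    rw [← h2]; exact hfib
  have hprod : (∑' p, F p) = (∑' k, blockSum part u x k) * (∑' k, blockSum part v x k) :=
    (tsum_mul_tsum_of_summable_norm (f := fun k => blockSum part u x k)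
      (g := fun k => blockSum part v x k)
      (by simpa [Real.norm_eq_abs] using hu) (by simpa [Real.norm_eq_abs] using hv)).symm
  have hle : ∀ m, |blockSum part (shMul u v) x m| ≤ ∑' p : ↥(g ⁻¹' {m}), |F ↑p| := by
    intro m
    rw [← hval m]
    simpa [Real.norm_eq_abs] using norm_tsum_le_tsum_norm
      (f := fun p : ↥(g ⁻¹' {m}) => F ↑p)
      (by simp only [Real.norm_eq_abs]; exact habs.subtype (g ⁻¹' {m}))
  have hs1 : Summable (fun k => |blockSum part (shMul u v) x k|) :=
    Summable.of_nonneg_of_le (fun m => abs_nonneg _) hle habsfib.summable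
  refine ⟨hs1, ?_, hprod ▸ hmain⟩
  calc (∑' k, |blockSum part (shMul u v) x k|)
      ≤ ∑' m, ∑' p : ↥(g ⁻¹' {m}), |F ↑p| := Summable.tsum_le_tsum hle hs1 habsfib.summable
    _ = ∑' p, |F p| := habsfib.tsum_eq
    _ = ∑' p : ℕ × ℕ, |blockSum part u x p.1| * |blockSum part v x p.2| :=
        tsum_congr fun p => abs_mul _ _
    _ = (∑' k, |blockSum part u x k|) * (∑' k, |blockSum part v x k|) :=
        (tsum_mul_tsum_of_summable_norm (f := fun k => |blockSum part u x k|)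
          (g := fun k => |blockSum part v x k|)
          (by simpa [Real.norm_eq_abs] using hu)
          (by simpa [Real.norm_eq_abs] using hv)).symm

theorem blockSum_emptyWordUnit (hlen : SameLengthBlocks part) (hx : x ∈ GroupLikeSet Sset)
    (k : ℕ) :
    blockSum part emptyWordUnit x k = if k = part ([] : List (Fin d)) then 1 else 0 := by
  classical
  rw [blockSum_eq hlen]
  rcases eq_or_ne k (part ([] : List (Fin d))) with rfl | h
  · rw [if_pos rfl, Finset.sum_eq_single ([] : List (Fin d))]
    · rw [hx.1]; simp [emptyWordUnit]
    · intro K _ hne; simp [emptyWordUnit, hne]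
    · intro hmem; exact absurd ((mem_blockF hlen).mpr rfl) hmem
  · rw [if_neg h]
    apply Finset.sum_eq_zero
    intro K hK
    have hKne : K ≠ [] := by
      rintro rfl
      exact h ((mem_blockF hlen).mp hK).symm
    simp [emptyWordUnit, hKne]

theorem shPow_summ (hlen : SameLengthBlocks part) (hcompat : ShuffleCompatible part)
    (hx : x ∈ GroupLikeSet Sset) (w : TA d)
    (hw : Summable fun k => |blockSum part w x k|) : ∀ j : ℕ,
    Summable (fun k => |blockSum part (shPow w j) x k|) ∧
    (∑' k, |blockSum part (shPow w j) x k|) ≤ (∑' k, |blockSum part w x k|) ^ j ∧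
    (∑' k, blockSum part (shPow w j) x k) = (∑' k, blockSum part w x k) ^ j := by
  intro j
  induction j with
  | zero =>
    have h0 : ∀ k, blockSum part (shPow w 0) x k
        = if k = part ([] : List (Fin d)) then 1 else 0 := fun k =>
      blockSum_emptyWordUnit hlen hx k
    have hsum : HasSum (fun k => blockSum part (shPow w 0) x k) 1 := by
      rw [funext h0]
      exact hasSum_ite_eq _ 1
    have habs : HasSum (fun k => |blockSum part (shPow w 0) x k|) 1 := by
      have he : (fun k => |blockSum part (shPow w 0) x k|)
          = fun k => if k = part ([] : List (Fin d)) then 1 else 0 := by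
        funext k; rw [h0]; split_ifs <;> simp
      rw [he]
      exact hasSum_ite_eq _ 1
    exact ⟨habs.summable, by rw [habs.tsum_eq, pow_zero], by rw [hsum.tsum_eq, pow_zero]⟩
  | succ j ih =>
    have key := shMul_summ hlen hcompat hx (shPow w j) w ih.1 hw
    have hB0 : (0:ℝ) ≤ ∑' k, |blockSum part w x k| := tsum_nonneg fun k => abs_nonneg _
    refine ⟨key.1, ?_, ?_⟩
    · calc (∑' k, |blockSum part (shPow w (j+1)) x k|)
          ≤ (∑' k, |blockSum part (shPow w j) x k|) * (∑' k, |blockSum part w x k|) :=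
            key.2.1
        _ ≤ (∑' k, |blockSum part w x k|) ^ j * (∑' k, |blockSum part w x k|) :=
            mul_le_mul_of_nonneg_right ih.2.1 hB0
        _ = (∑' k, |blockSum part w x k|) ^ (j+1) := (pow_succ _ _).symm
    · simp only [shPow]
      rw [key.2.2.tsum_eq, ih.2.2, pow_succ]

theorem blockSum_bar (hlen : SameLengthBlocks part) (u : TA d) (k : ℕ) :
    blockSum part (bar u) x k
      = if k = part ([] : List (Fin d)) then 0 else blockSum part u x k := by
  classical
  rcases eq_or_ne k (part ([] : List (Fin d))) with rfl | h
  · rw [if_pos rfl, blockSum_eq hlen]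
    apply Finset.sum_eq_zero
    intro K hK
    have h1 : part K = part ([] : List (Fin d)) := (mem_blockF hlen).mp hK
    have h2 : K.length = 0 := hlen K [] h1
    have h3 : K = [] := List.length_eq_zero_iff.mp h2
    subst h3
    simp [bar]
  · rw [if_neg h, blockSum_eq hlen, blockSum_eq hlen]
    refine Finset.sum_congr rfl fun K hK => ?_
    have hKne : K ≠ [] := by rintro rfl; exact h ((mem_blockF hlen).mp hK).symm
    simp [bar, hKne]

theorem blockSum_empty (hlen : SameLengthBlocks part) (hx : x ∈ GroupLikeSet Sset) (u : TA d) :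
    blockSum part u x (part ([] : List (Fin d))) = u [] := by
  classical
  rw [blockSum_eq hlen, Finset.sum_eq_single ([] : List (Fin d))]
  · rw [hx.1, mul_one]
  · intro K hK hne
    exact absurd (List.length_eq_zero_iff.mp (hlen K [] ((mem_blockF hlen).mp hK))) hne
  · intro hmem; exact absurd ((mem_blockF hlen).mpr rfl) hmem

theorem blockSum_shPow_bar_eq_zero (hlen : SameLengthBlocks part) (u : TA d) {j m : ℕ}
    (h : lenOf part m < j) :
    blockSum part (shPow (bar u) j) x m = 0 := by
  rw [blockSum_eq hlen]
  apply Finset.sum_eq_zero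
  intro K hK
  rw [shPow_eq_zero (by simp [bar]) j K (by rw [length_of_mem_blockF hK]; exact h), zero_mul]

theorem blockSum_shExp (hlen : SameLengthBlocks part) (u : TA d) (m : ℕ) :
    blockSum part (shExp u) x m
      = Real.exp (u []) *
          ∑' j : ℕ, blockSum part (shPow (bar u) j) x m / (Nat.factorial j : ℝ) := by
  classical
  have hts : (∑' j : ℕ, blockSum part (shPow (bar u) j) x m / (Nat.factorial j : ℝ))
      = ∑ j ∈ Finset.range (lenOf part m + 1),
          blockSum part (shPow (bar u) j) x m / (Nat.factorial j : ℝ) := by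
    apply tsum_eq_sum
    intro j hj
    have hj' : ¬ j < lenOf part m + 1 := fun h => hj (Finset.mem_range.mpr h)
    have hlt : lenOf part m < j := by omega
    rw [blockSum_shPow_bar_eq_zero hlen u hlt, zero_div]
  rw [hts, blockSum_eq hlen]
  have hcongr : ∀ K ∈ blockF part m, shExp u K * x K
      = Real.exp (u []) * ∑ j ∈ Finset.range (lenOf part m + 1),
          (shPow (bar u) j K / (Nat.factorial j : ℝ)) * x K := by
    intro K hK
    simp only [shExp]
    rw [length_of_mem_blockF hK, mul_assoc, Finset.sum_mul]
  rw [Finset.sum_congr rfl hcongr, ← Finset.mul_sum, Finset.sum_comm]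
  congr 1
  refine Finset.sum_congr rfl fun j _ => ?_
  rw [blockSum_eq hlen, Finset.sum_div]
  exact Finset.sum_congr rfl fun K _ => by ring

theorem pairTA_eq (hlen : SameLengthBlocks part) (u : TA d)
    (hsum : Summable fun k => blockSum part u x k) :
    pairTA u x = ∑' k, blockSum part u x k := by
  classical
  have hfib := hsum.hasSum.tsum_fiberwise (lenOf part)
  have hval : ∀ n, (∑' k : ↥(lenOf part ⁻¹' {n}), blockSum part u x ↑k)
      = levelPair u x n := by
    intro n
    rw [tsum_preimage_ite]
    have h1 : (∑' k : ℕ, if lenOf part k = n then blockSum part u x k else 0)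
        = ∑ k ∈ (allWords d n).image part, blockSum part u x k := by
      refine (tsum_eq_sum (s := (allWords d n).image part) ?_).trans ?_
      · intro k hk
        split_ifs with hln
        · by_contra hne
          rw [blockSum_eq hlen] at hne
          obtain ⟨I, hI, hI0⟩ := Finset.exists_ne_zero_of_sum_ne_zero hne
          refine hk (Finset.mem_image.mpr ⟨I, mem_allWords.mpr ?_, (mem_blockF hlen).mp hI⟩)
          rw [length_of_mem_blockF hI, hln]
        · rfl
      · refine Finset.sum_congr rfl fun k hk => ?_
        obtain ⟨I₀, hI₀, hI₀k⟩ := Finset.mem_image.mp hk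
        have : lenOf part k = n := by
          rw [lenOf_eq hlen hI₀k]
          exact mem_allWords.mp hI₀
        rw [if_pos this]
    rw [h1, levelPair_eq]
    rw [← Finset.sum_fiberwise_of_maps_to (g := part) (t := (allWords d n).image part)
        (fun I hI => Finset.mem_image_of_mem _ hI) (fun I => u I * x I)]
    refine Finset.sum_congr rfl fun k hk => ?_
    have hsets : blockF part k = (allWords d n).filter (fun I => part I = k) := by
      ext I
      simp only [Finset.mem_filter, mem_allWords, mem_blockF hlen]
      constructor
      · intro h
        refine ⟨?_, h⟩
        obtain ⟨I₀, hI₀, hI₀k⟩ := Finset.mem_image.mp hk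
        rw [hlen I I₀ (h.trans hI₀k.symm)]
        exact mem_allWords.mp hI₀
      · exact fun h => h.2
    rw [blockSum_eq hlen, hsets]
  have h2 : (fun n => ∑' k : ↥(lenOf part ⁻¹' {n}), blockSum part u x ↑k)
      = fun n => levelPair u x n := funext hval
  rw [pairTA, ← h2]
  exact hfib.tsum_eq

end ShuffleMain2
section ShuffleFinal

open Finset

variable {d : ℕ} {part : List (Fin d) → ℕ} {Sset : Set (Fin d → ℝ)} {x : TA d}

set_option maxHeartbeats 2000000 in
theorem master (hlen : SameLengthBlocks part) (hcompat : ShuffleCompatible part)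
    (hx : x ∈ GroupLikeSet Sset) (u : TA d)
    (hu : Summable fun k => |blockSum part u x k|) :
    Summable (fun k => |blockSum part (shExp u) x k|) ∧
    seminorm' part (shExp u) x ≤ Real.exp (seminorm' part u x) ∧
    Real.exp (pairTA u x) = pairTA (shExp u) x := by
  classical
  have hwsum : Summable fun k => |blockSum part (bar u) x k| := by
    refine Summable.of_nonneg_of_le (fun k => abs_nonneg _) (fun k => ?_) hu
    rw [blockSum_bar hlen]
    split_ifs with h
    · simpa using abs_nonneg (blockSum part u x k)
    · exact le_refl _
  have hB0 : (0:ℝ) ≤ ∑' k, |blockSum part (bar u) x k| := tsum_nonneg fun k => abs_nonneg _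
  have hpow := shPow_summ hlen hcompat hx (bar u) hwsum
  set H : ℕ × ℕ → ℝ :=
    fun p => blockSum part (shPow (bar u) p.1) x p.2 / (Nat.factorial p.1 : ℝ) with hH
  have habsrow : ∀ j : ℕ, Summable fun m => |H (j, m)| := by
    intro j
    refine ((hpow j).1.div_const (Nat.factorial j : ℝ)).congr fun m => ?_
    rw [hH, abs_div, Nat.abs_cast]
  have hrowsum : ∀ j : ℕ, (∑' m, |H (j, m)|)
      = (∑' m, |blockSum part (shPow (bar u) j) x m|) / (Nat.factorial j : ℝ) := by
    intro j
    rw [← tsum_div_const]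
    exact tsum_congr fun m => by rw [hH, abs_div, Nat.abs_cast]
  have hfacpos : ∀ j : ℕ, (0:ℝ) < (Nat.factorial j : ℝ) :=
    fun j => Nat.cast_pos.mpr (Nat.factorial_pos j)
  have habsH : Summable fun p : ℕ × ℕ => |H p| := by
    rw [summable_prod_of_nonneg (fun p => abs_nonneg _)]
    refine ⟨habsrow, ?_⟩
    refine Summable.of_nonneg_of_le (fun j => tsum_nonneg fun m => abs_nonneg _)
      (fun j => ?_)
      (Real.summable_pow_div_factorial (∑' k, |blockSum part (bar u) x k|))
    rw [hrowsum j]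
    exact (div_le_div_iff_of_pos_right (hfacpos j)).mpr (hpow j).2.1
  have hHsum : Summable H := summable_abs_iff.mp habsH
  have habsswap : Summable fun p : ℕ × ℕ => |H (p.2, p.1)| :=
    (Equiv.prodComm ℕ ℕ).summable_iff.mpr habsH
  have hswap : Summable fun p : ℕ × ℕ => H (p.2, p.1) :=
    (Equiv.prodComm ℕ ℕ).summable_iff.mpr hHsum
  have hbsExp : ∀ m, blockSum part (shExp u) x m = Real.exp (u []) * ∑' j, H (j, m) :=
    fun m => blockSum_shExp hlen u m
  have hcolabs : Summable fun m => ∑' j, |H (j, m)| := habsswap.prod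
  have hbound : ∀ m, |blockSum part (shExp u) x m|
      ≤ Real.exp (u []) * ∑' j, |H (j, m)| := by
    intro m
    rw [hbsExp m, abs_mul, abs_of_pos (Real.exp_pos _)]
    refine mul_le_mul_of_nonneg_left ?_ (Real.exp_pos _).le
    simpa [Real.norm_eq_abs] using
      norm_tsum_le_tsum_norm (f := fun j => H (j, m))
        (by simpa [Real.norm_eq_abs] using habsswap.prod_factor m)
  have hexpSummable : Summable (fun m => |blockSum part (shExp u) x m|) :=
    Summable.of_nonneg_of_le (fun m => abs_nonneg _) hbound (hcolabs.mul_left _)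
  have habsfub : (∑' m, ∑' j, |H (j, m)|) = ∑' j, ∑' m, |H (j, m)| := Summable.tsum_comm habsH
  have hbarabs : ∀ k, |blockSum part (bar u) x k|
      = if k = part ([] : List (Fin d)) then 0 else |blockSum part u x k| := by
    intro k; rw [blockSum_bar hlen]; split_ifs <;> simp
  have hseq : seminorm' part u x = |u []| + ∑' k, |blockSum part (bar u) x k| := by
    rw [seminorm', Summable.tsum_eq_add_tsum_ite hu (part ([] : List (Fin d))),
      blockSum_empty hlen hx]
    congr 1
    exact tsum_congr fun k => (hbarabs k).symm
  have hP : Summable (fun k => blockSum part u x k) := summable_abs_iff.mp hu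
  have hpair : (∑' k, blockSum part u x k)
      = u [] + ∑' k, blockSum part (bar u) x k := by
    rw [Summable.tsum_eq_add_tsum_ite hP (part ([] : List (Fin d))), blockSum_empty hlen hx]
    congr 1
    exact tsum_congr fun k => (blockSum_bar hlen u k).symm
  refine ⟨hexpSummable, ?_, ?_⟩
  · have hc1 : seminorm' part (shExp u) x
        ≤ Real.exp (u []) * ∑' m, ∑' j, |H (j, m)| := by
      rw [seminorm', ← tsum_mul_left]
      exact Summable.tsum_le_tsum hbound hexpSummable (hcolabs.mul_left _)
    have hc2 : (∑' m, ∑' j, |H (j, m)|)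
        ≤ Real.exp (∑' k, |blockSum part (bar u) x k|) := by
      rw [habsfub, exp_eq_tsum_pow_div]
      refine Summable.tsum_le_tsum (fun j => ?_) habsH.prod
        (Real.summable_pow_div_factorial _)
      rw [hrowsum j]
      exact (div_le_div_iff_of_pos_right (hfacpos j)).mpr (hpow j).2.1
    calc seminorm' part (shExp u) x
        ≤ Real.exp (u []) * ∑' m, ∑' j, |H (j, m)| := hc1
      _ ≤ Real.exp (u []) * Real.exp (∑' k, |blockSum part (bar u) x k|) :=
          mul_le_mul_of_nonneg_left hc2 (Real.exp_pos _).le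
      _ = Real.exp (u [] + ∑' k, |blockSum part (bar u) x k|) := (Real.exp_add _ _).symm
      _ ≤ Real.exp (seminorm' part u x) := by
          refine Real.exp_le_exp.mpr ?_
          rw [hseq]
          exact add_le_add_left (le_abs_self _) _
  · have hPexp : pairTA (shExp u) x = ∑' m, blockSum part (shExp u) x m :=
      pairTA_eq hlen (shExp u) (summable_abs_iff.mp hexpSummable)
    have hPu : pairTA u x = ∑' k, blockSum part u x k := pairTA_eq hlen u hP
    have hfub : (∑' m, ∑' j, H (j, m)) = ∑' j, ∑' m, H (j, m) := Summable.tsum_comm hHsum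
    have hPexp2 : (∑' m, blockSum part (shExp u) x m)
        = Real.exp (u []) * ∑' j, ∑' m, H (j, m) := by
      rw [← hfub, ← tsum_mul_left]
      exact tsum_congr hbsExp
    have hrow : ∀ j : ℕ, (∑' m, H (j, m))
        = (∑' k, blockSum part (bar u) x k) ^ j / (Nat.factorial j : ℝ) := by
      intro j
      rw [← (hpow j).2.2, ← tsum_div_const]
    have hexpP : (∑' j : ℕ, ∑' m, H (j, m))
        = Real.exp (∑' k, blockSum part (bar u) x k) := by
      rw [exp_eq_tsum_pow_div]
      exact tsum_congr hrow
    rw [hPexp, hPexp2, hexpP, hPu, hpair, Real.exp_add]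

end ShuffleFinal
/-- for a shuffle-compatible partition, if `u ∈ 𝒮(S)*` then
`exp_⧢(u) ∈ 𝒮(S)*`, `|exp_⧢(u)|_x ≤ exp(|u|_x)`, and `exp(⟨u,x⟩) = ⟨exp_⧢(u),x⟩` for every
group-like `x`. -/
theorem shuffle_exponential_bound {d : ℕ}
    (Sset : Set (Fin d → ℝ)) (part : List (Fin d) → ℕ)
    (hlen : SameLengthBlocks part) (hcompat : ShuffleCompatible part)
    (u : TA d) (hu : DualMem part Sset u) :
    DualMem part Sset (shExp u) ∧
    ∀ x ∈ GroupLikeSet Sset,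
      seminorm' part (shExp u) x ≤ Real.exp (seminorm' part u x) ∧
      Real.exp (pairTA u x) = pairTA (shExp u) x := by
  constructor
  · intro x hx
    exact (master hlen hcompat hx u (hu x hx)).1
  · intro x hx
    exact ⟨(master hlen hcompat hx u (hu x hx)).2.1,
      (master hlen hcompat hx u (hu x hx)).2.2⟩
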